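/- Let G be a graph with ϑ'(G) ≥ t for an integer t ≥ 1, and let G_t be the graph on V(G)×[t] where (u,i) ∼ (v,j) iff (i ≠ j and u ≃ v) or (i = j and u ≠ v). Then ϑ'(G_t) ≥ t. -/

import Mathlib

open Matrix Kronecker

set_option linter.unusedSectionVars false
set_option maxHeartbeats 1000000

/-- The Schrijver theta number `ϑ'(G)`: the supremum of `⟨J,X⟩` over doubly nonnegative
matrices `X` with `Tr(X) = 1` and `X_{uv} = 0` on the edges of `G`. -/
noncomputable def thetaPrime {V : Type*} [Fintype V] (G : SimpleGraph V) : ℝ :=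
  sSup {r : ℝ | ∃ X : Matrix V V ℝ, X.PosSemidef ∧ (∀ u v, 0 ≤ X u v) ∧
    X.trace = 1 ∧ (∀ u v, G.Adj u v → X u v = 0) ∧ r = ∑ u, ∑ v, X u v}

/-- The graph `G_t` on `V(G) × [t]`: `(u,i) ∼ (v,j)` iff (`i ≠ j` and `u ≃ v`) or
(`i = j` and `u ≠ v`), where `u ≃ v` means adjacent or equal. -/
def Gt {V : Type*} (G : SimpleGraph V) (t : ℕ) : SimpleGraph (V × Fin t) :=
  SimpleGraph.fromRel (fun p q =>
    (p.2 ≠ q.2 ∧ (p.1 = q.1 ∨ G.Adj p.1 q.1)) ∨ (p.2 = q.2 ∧ p.1 ≠ q.1))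

section ThetaAux
variable {V : Type*} [Fintype V] [DecidableEq V] {t : ℕ}

lemma quad_eq (X : Matrix V V ℝ) (y : V → ℝ) :
    star y ⬝ᵥ X.mulVec y = ∑ u, ∑ v, X u v * y u * y v := by
  simp only [dotProduct, mulVec, Pi.star_apply, star_trivial, Finset.mul_sum]
  exact Finset.sum_congr rfl fun u _ => Finset.sum_congr rfl fun v _ => by ring

lemma posSemidef_iff_quad {X : Matrix V V ℝ} (hsymm : X.IsHermitian) :
    X.PosSemidef ↔ ∀ y : V → ℝ, 0 ≤ ∑ u, ∑ v, X u v * y u * y v := by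
  constructor
  · intro hX y; rw [← quad_eq]; exact hX.dotProduct_mulVec_nonneg y
  · intro hq; exact .of_dotProduct_mulVec_nonneg hsymm fun y => by rw [quad_eq]; exact hq y

lemma quad_pair {X : Matrix V V ℝ} (hX : X.PosSemidef) (u v : V) (s c : ℝ) :
    0 ≤ s * (X u u * s + X u v * c) + c * (X v u * s + X v v * c) := by
  have h0 := hX.dotProduct_mulVec_nonneg (Pi.single u s + Pi.single v c)
  rwa [mulVec_add, mulVec_single, mulVec_single, star_trivial, add_dotProduct,
    single_dotProduct, single_dotProduct, Pi.add_apply, Pi.add_apply] at h0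

lemma psd_row_zero {X : Matrix V V ℝ} (hX : X.PosSemidef) {u : V} (hu : X u u = 0)
    (v : V) : X u v = 0 := by
  rcases eq_or_ne u v with rfl | huv
  · exact hu
  by_contra hne
  have hsym : X v u = X u v := by
    have := hX.1.apply u v; simpa using this
  have key : ∀ s : ℝ, 0 ≤ 2 * (X u v * s) + X v v := by
    intro s
    have h0 := quad_pair hX u v s 1
    rw [hu, hsym] at h0; nlinarith [h0]
  have h2 : 2 * (X u v * (-(X v v + 1) / (2 * X u v))) = -(X v v + 1) := by
    field_simp
  have := key (-(X v v + 1) / (2 * X u v))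
  rw [h2] at this
  linarith

lemma psd_two_mul_le {X : Matrix V V ℝ} (hX : X.PosSemidef) (u v : V) :
    2 * X u v ≤ X u u + X v v := by
  have hsym : X v u = X u v := by
    have := hX.1.apply u v; simpa using this
  have h0 := quad_pair hX u v 1 (-1)
  nlinarith [h0]

lemma theta_set_bddAbove {W : Type*} [Fintype W] [DecidableEq W] (H : SimpleGraph W) :
    BddAbove {r : ℝ | ∃ X : Matrix W W ℝ, X.PosSemidef ∧ (∀ u v, 0 ≤ X u v) ∧
      X.trace = 1 ∧ (∀ u v, H.Adj u v → X u v = 0) ∧ r = ∑ u, ∑ v, X u v} := by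
  refine ⟨Fintype.card W, ?_⟩
  rintro r ⟨X, hpsd, hnn, htr, hedge, rfl⟩
  have htr' : ∑ u, X u u = 1 := by simpa [Matrix.trace, Matrix.diag] using htr
  have hb : ∀ u v, X u v ≤ (X u u + X v v) / 2 := fun u v => by
    linarith [psd_two_mul_le hpsd u v]
  calc ∑ u, ∑ v, X u v ≤ ∑ u, ∑ v, (X u u + X v v) / 2 :=
        Finset.sum_le_sum fun u _ => Finset.sum_le_sum fun v _ => hb u v
    _ = Fintype.card W := by
        have inner : ∀ u, ∑ v : W, (X u u + X v v)/2 = ((Fintype.card W : ℝ) * X u u + 1)/2 := by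
          intro u
          rw [← Finset.sum_div, Finset.sum_add_distrib, htr', Finset.sum_const,
            Finset.card_univ, nsmul_eq_mul]
        rw [Finset.sum_congr rfl fun u _ => inner u, ← Finset.sum_div,
          Finset.sum_add_distrib, ← Finset.mul_sum, htr', Finset.sum_const,
          Finset.card_univ, nsmul_eq_mul]
        ring


lemma exists_good (G : SimpleGraph V) {X : Matrix V V ℝ} (hpsd : X.PosSemidef)
    (hnn : ∀ u v, 0 ≤ X u v) (htr : X.trace = 1)
    (hedge : ∀ u v, G.Adj u v → X u v = 0) :
    ∃ Z : Matrix V V ℝ, Z.PosSemidef ∧ (∀ u v, 0 ≤ Z u v) ∧ Z.trace = 1 ∧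
      (∀ u v, G.Adj u v → Z u v = 0) ∧
      (∑ u, ∑ v, X u v) ≤ (∑ u, ∑ v, Z u v) ∧
      ((∑ u, ∑ v, Z u v) • Matrix.diagonal (fun u => Z u u) - Z).PosSemidef := by
  classical
  have htr' : ∑ u, X u u = 1 := by simpa [Matrix.trace, Matrix.diag] using htr
  have hsymX : ∀ u v, X v u = X u v := fun u v => by
    have := hpsd.1.apply u v; simpa using this
  have hrow0 : ∀ u v, X u u = 0 → X u v = 0 := fun u v h => psd_row_zero hpsd h v
  set F : (V → ℝ) → ℝ := fun a => ∑ u, ∑ v, X u v * a u * a v with hF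
  set K : Set (V → ℝ) :=
    {a | (∀ u, 0 ≤ a u) ∧ (∀ u, X u u = 0 → a u = 0) ∧ ∑ u, X u u * (a u)^2 = 1} with hK
  have ha₀ : (fun u => if X u u = 0 then (0:ℝ) else 1) ∈ K := by
    refine ⟨fun u => by dsimp only; split <;> norm_num, fun u h => by simp [h], ?_⟩
    rw [show ∑ u, X u u * (if X u u = 0 then (0:ℝ) else 1)^2 = ∑ u, X u u from
      Finset.sum_congr rfl fun u _ => by split <;> simp_all]
    exact htr'
  have hKne : K.Nonempty := ⟨_, ha₀⟩
  have hFc : Continuous F := by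
    apply continuous_finset_sum; intro u _
    apply continuous_finset_sum; intro v _
    exact (continuous_const.mul (continuous_apply u)).mul (continuous_apply v)
  have hKclosed : IsClosed K := by
    have : K = (⋂ u, {a : V → ℝ | 0 ≤ a u}) ∩
        ((⋂ u, {a : V → ℝ | X u u = 0 → a u = 0}) ∩
          {a : V → ℝ | ∑ u, X u u * (a u)^2 = 1}) := by
      ext a
      simp only [hK, Set.mem_setOf_eq, Set.mem_inter_iff, Set.mem_iInter]
    rw [this]
    refine (isClosed_iInter fun u =>
      isClosed_le continuous_const (continuous_apply u)).inter (IsClosed.inter ?_ ?_)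
    · refine isClosed_iInter fun u => ?_
      by_cases h : X u u = 0
      · have : {a : V → ℝ | X u u = 0 → a u = 0} = {a | a u = 0} := by ext a; simp [h]
        rw [this]; exact isClosed_eq (continuous_apply u) continuous_const
      · have : {a : V → ℝ | X u u = 0 → a u = 0} = Set.univ := by ext a; simp [h]
        rw [this]; exact isClosed_univ
    · refine isClosed_eq ?_ continuous_const
      apply continuous_finset_sum; intro u _
      exact continuous_const.mul ((continuous_apply u).pow 2)
  have hsub : K ⊆ Set.pi Set.univ
      (fun u => Set.Icc (0:ℝ) (if X u u = 0 then 0 else Real.sqrt (X u u)⁻¹)) := by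
    rintro a ⟨h1, h2, h3⟩ u _
    by_cases h : X u u = 0
    · simp [h, h2 u h]
    · refine ⟨h1 u, ?_⟩
      simp only [h, if_false]
      have hpos : 0 < X u u := lt_of_le_of_ne (hnn u u) (Ne.symm h)
      have hterm : X u u * a u ^ 2 ≤ 1 := by
        rw [← h3]
        exact Finset.single_le_sum (f := fun v => X v v * a v ^ 2)
          (fun v _ => mul_nonneg (hnn v v) (sq_nonneg _)) (Finset.mem_univ u)
      have hle : a u ^ 2 ≤ (X u u)⁻¹ := by
        rw [← one_div, le_div_iff₀ hpos]; linarith [mul_comm (X u u) (a u ^ 2) ▸ hterm]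
      calc a u = Real.sqrt (a u ^ 2) := by rw [Real.sqrt_sq (h1 u)]
        _ ≤ Real.sqrt (X u u)⁻¹ := Real.sqrt_le_sqrt hle
  have hKcompact : IsCompact K :=
    IsCompact.of_isClosed_subset (isCompact_univ_pi fun u => isCompact_Icc) hKclosed hsub
  obtain ⟨a, haK, hamax⟩ := hKcompact.exists_isMaxOn hKne hFc.continuousOn
  obtain ⟨hann, haz, hasum⟩ := haK
  set Z : Matrix V V ℝ := Matrix.of (fun u v => X u v * a u * a v) with hZdef
  have hZapp : ∀ u v, Z u v = X u v * a u * a v := fun u v => rfl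
  have hZsym : Z.IsHermitian := by
    refine Matrix.ext fun i j => ?_
    simp only [conjTranspose_apply, hZapp, star_trivial]
    rw [hsymX]; ring
  have hZpsd : Z.PosSemidef := by
    rw [posSemidef_iff_quad hZsym]
    intro y
    have h0 := (posSemidef_iff_quad hpsd.1).mp hpsd (fun u => a u * y u)
    calc (0:ℝ) ≤ ∑ u, ∑ v, X u v * (a u * y u) * (a v * y v) := h0
      _ = ∑ u, ∑ v, Z u v * y u * y v :=
        Finset.sum_congr rfl fun u _ => Finset.sum_congr rfl fun v _ => by
          rw [hZapp]; ring
  have hZtr : Z.trace = 1 := by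
    simp only [Matrix.trace, Matrix.diag, hZapp]
    rw [show ∑ u, X u u * a u * a u = ∑ u, X u u * (a u)^2 from
      Finset.sum_congr rfl fun u _ => by ring]
    exact hasum
  have hZnn : ∀ u v, 0 ≤ Z u v := fun u v =>
    mul_nonneg (mul_nonneg (hnn u v) (hann u)) (hann v)
  have hZedge : ∀ u v, G.Adj u v → Z u v = 0 := fun u v h => by
    rw [hZapp, hedge u v h]; ring
  -- lam ≥ S
  have hFa₀ : F (fun u => if X u u = 0 then (0:ℝ) else 1) = ∑ u, ∑ v, X u v := by
    refine Finset.sum_congr rfl fun u _ => Finset.sum_congr rfl fun v _ => ?_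
    by_cases hu : X u u = 0
    · simp [hrow0 u v hu, hu]
    · by_cases hv : X v v = 0
      · rw [← hsymX, hrow0 v u hv]; simp
      · simp [hu, hv]
  have hlamZ : F a = ∑ u, ∑ v, Z u v :=
    Finset.sum_congr rfl fun u _ => Finset.sum_congr rfl fun v _ => (hZapp u v).symm
  have hSlam : (∑ u, ∑ v, X u v) ≤ ∑ u, ∑ v, Z u v := by
    rw [← hlamZ, ← hFa₀]; exact hamax ha₀
  refine ⟨Z, hZpsd, hZnn, hZtr, hZedge, hSlam, ?_⟩
  -- key PSD part
  set lam : ℝ := ∑ u, ∑ v, Z u v with hlam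
  have hYsym : ((lam • Matrix.diagonal fun u => Z u u) - Z).IsHermitian := by
    refine Matrix.ext fun i j => ?_
    simp only [conjTranspose_apply, Matrix.sub_apply, Matrix.smul_apply, diagonal_apply, star_trivial,
      smul_eq_mul]
    rcases eq_or_ne i j with rfl | hij
    · simp
    · simp only [hij, Ne.symm hij, if_neg, if_false]
      rw [hZapp, hZapp, hsymX]; ring
  rw [posSemidef_iff_quad hYsym]
  intro y
  set b : V → ℝ := fun u => a u * |y u| with hb
  set m : ℝ := ∑ u, X u u * (b u)^2 with hm
  have hbnn : ∀ u, 0 ≤ b u := fun u => mul_nonneg (hann u) (abs_nonneg _)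
  have hmnn : 0 ≤ m := Finset.sum_nonneg fun v _ => mul_nonneg (hnn v v) (sq_nonneg _)
  have hdiag : ∑ u, ∑ v, (lam • Matrix.diagonal fun w => Z w w) u v * y u * y v
      = lam * m := by
    have inner : ∀ u, ∑ v, (lam • Matrix.diagonal fun w => Z w w) u v * y u * y v
        = lam * (X u u * (b u)^2) := by
      intro u
      rw [Finset.sum_congr rfl (fun v _ => show
          (lam • Matrix.diagonal fun w => Z w w) u v * y u * y v
          = if u = v then lam * (Z u u * (y u * y v)) else 0 by
        simp only [Matrix.smul_apply, diagonal_apply, smul_eq_mul]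
        rcases eq_or_ne u v with rfl | hvu
        · simp; ring
        · simp [hvu])]
      rw [Finset.sum_ite_eq Finset.univ u (fun v => lam * (Z u u * (y u * y v)))]
      simp only [Finset.mem_univ, if_true]
      rw [hZapp]
      simp only [hb]
      rw [mul_pow, sq_abs]
      ring
    rw [Finset.sum_congr rfl fun u _ => inner u, ← Finset.mul_sum, hm]
  have hsplit : ∑ u, ∑ v, ((lam • Matrix.diagonal fun w => Z w w) - Z) u v * y u * y v
      = lam * m - ∑ u, ∑ v, Z u v * y u * y v := by
    rw [← hdiag, ← Finset.sum_sub_distrib]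
    refine Finset.sum_congr rfl fun u _ => ?_
    rw [← Finset.sum_sub_distrib]
    refine Finset.sum_congr rfl fun v _ => ?_
    rw [Matrix.sub_apply]; ring
  have step1 : ∑ u, ∑ v, Z u v * y u * y v ≤ ∑ u, ∑ v, X u v * b u * b v := by
    refine Finset.sum_le_sum fun u _ => Finset.sum_le_sum fun v _ => ?_
    have h1 : y u * y v ≤ |y u| * |y v| := by rw [← abs_mul]; exact le_abs_self _
    have hc : 0 ≤ X u v * a u * a v :=
      mul_nonneg (mul_nonneg (hnn u v) (hann u)) (hann v)
    calc Z u v * y u * y v = (X u v * a u * a v) * (y u * y v) := by rw [hZapp]; ring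
      _ ≤ (X u v * a u * a v) * (|y u| * |y v|) := mul_le_mul_of_nonneg_left h1 hc
      _ = X u v * b u * b v := by simp only [hb]; ring
  have step2 : ∑ u, ∑ v, X u v * b u * b v ≤ lam * m := by
    by_cases hm0 : m = 0
    · have hterms : ∀ u, X u u * (b u)^2 = 0 := by
        have h0 : ∑ u, X u u * (b u)^2 = 0 := by rw [← hm, hm0]
        intro u
        exact (Finset.sum_eq_zero_iff_of_nonneg
          (fun v _ => mul_nonneg (hnn v v) (sq_nonneg (b v)))).mp h0 u (Finset.mem_univ u)
      have hFb : ∑ u, ∑ v, X u v * b u * b v = 0 := by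
        apply Finset.sum_eq_zero; intro u _
        rcases mul_eq_zero.mp (hterms u) with hcase | hcase
        · apply Finset.sum_eq_zero; intro v _; rw [hrow0 u v hcase]; ring
        · have hbu : b u = 0 := by
            have := sq_eq_zero_iff.mp hcase; exact this
          apply Finset.sum_eq_zero; intro v _; rw [hbu]; ring
      rw [hFb, hm0, mul_zero]
    · have hmpos : 0 < m := lt_of_le_of_ne hmnn (Ne.symm hm0)
      have hsq : Real.sqrt m * Real.sqrt m = m := Real.mul_self_sqrt hmnn
      have hsqpos : 0 < Real.sqrt m := Real.sqrt_pos.mpr hmpos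
      set b' : V → ℝ := fun u => b u / Real.sqrt m with hb'
      have hb'K : b' ∈ K := by
        refine ⟨fun u => div_nonneg (hbnn u) hsqpos.le,
          fun u hX0 => by simp only [hb', hb]; rw [haz u hX0]; simp, ?_⟩
        have hterm : ∀ u, X u u * (b' u)^2 = (X u u * (b u)^2)/m := by
          intro u; simp only [hb']; rw [div_pow, Real.sq_sqrt hmnn]; ring
        rw [Finset.sum_congr rfl fun u _ => hterm u, ← Finset.sum_div, ← hm,
          div_self hm0]
      have hFb' : F b' = (∑ u, ∑ v, X u v * b u * b v) / m := by
        simp only [hF]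
        rw [Finset.sum_div]
        refine Finset.sum_congr rfl fun u _ => ?_
        rw [Finset.sum_div]
        refine Finset.sum_congr rfl fun v _ => ?_
        have : X u v * (b u / Real.sqrt m) * (b v / Real.sqrt m)
            = X u v * b u * b v / (Real.sqrt m * Real.sqrt m) := by ring
        simp only [hb']
        rw [this, hsq]
      have hle : F b' ≤ F a := hamax hb'K
      rw [hFb', hlamZ] at hle
      exact (div_le_iff₀ hmpos).mp hle
  rw [hsplit]
  linarith


lemma psd_smul {A : Matrix V V ℝ} (hA : A.PosSemidef) {c : ℝ} (hc : 0 ≤ c) :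
    (c • A).PosSemidef := by
  refine Matrix.PosSemidef.of_dotProduct_mulVec_nonneg ?_ fun x => ?_
  · rw [Matrix.IsHermitian, Matrix.conjTranspose_smul, hA.1, star_trivial]
  · rw [Matrix.smul_mulVec, dotProduct_smul, smul_eq_mul]
    exact mul_nonneg hc (hA.dotProduct_mulVec_nonneg x)

lemma psd_add {A B : Matrix V V ℝ} (hA : A.PosSemidef) (hB : B.PosSemidef) :
    (A + B).PosSemidef :=
  Matrix.PosSemidef.of_dotProduct_mulVec_nonneg (hA.1.add hB.1) fun x => by
    rw [Matrix.add_mulVec, dotProduct_add]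
    exact add_nonneg (hA.dotProduct_mulVec_nonneg x) (hB.dotProduct_mulVec_nonneg x)

lemma psd_kron {n m : Type*} [Fintype n] [Fintype m] {A : Matrix n n ℝ}
    {B : Matrix m m ℝ} (hA : A.PosSemidef) (hB : B.PosSemidef) :
    (A ⊗ₖ B).PosSemidef := by
  exact hA.kronecker hB


lemma psd_P (ht : 0 < t) : (Matrix.of fun (_ _ : Fin t) => (t:ℝ)⁻¹).PosSemidef := by
  have hherm : (Matrix.of fun (_ _ : Fin t) => (t:ℝ)⁻¹).IsHermitian := by
    ext i j; simp [Matrix.conjTranspose_apply]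
  rw [posSemidef_iff_quad hherm]
  intro y
  have e : ∑ i, ∑ j, ((t:ℝ)⁻¹ * y i) * y j = (∑ i, (t:ℝ)⁻¹ * y i) * (∑ j, y j) :=
    (Finset.sum_mul_sum _ _ _ _).symm
  calc (0:ℝ) ≤ (t:ℝ)⁻¹ * (∑ i, y i)^2 := by positivity
    _ = ∑ i, ∑ j, ((t:ℝ)⁻¹ * y i) * y j := by rw [e, ← Finset.mul_sum]; ring
    _ = ∑ i, ∑ j, (Matrix.of fun (_ _ : Fin t) => (t:ℝ)⁻¹) i j * y i * y j := by
      refine Finset.sum_congr rfl fun i _ => Finset.sum_congr rfl fun j _ => ?_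
      simp [Matrix.of_apply]

lemma psd_Q (ht : 0 < t) :
    (Matrix.of fun (i j : Fin t) => (if i = j then (1:ℝ) else 0) - (t:ℝ)⁻¹).PosSemidef := by
  set Qm : Matrix (Fin t) (Fin t) ℝ :=
    Matrix.of fun i j => (if i = j then (1:ℝ) else 0) - (t:ℝ)⁻¹ with hQm
  have happ : ∀ i j, Qm i j = (if i = j then (1:ℝ) else 0) - (t:ℝ)⁻¹ := fun i j => rfl
  have hherm : Qm.IsHermitian := by
    ext i j
    simp only [Matrix.conjTranspose_apply, happ, star_trivial]
    rcases eq_or_ne i j with rfl | hij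
    · simp
    · simp [hij, Ne.symm hij]
  rw [posSemidef_iff_quad hherm]
  intro y
  have htpos : (0:ℝ) < t := by exact_mod_cast ht
  have hsum : ∑ i, ∑ j, Qm i j * y i * y j
      = (∑ i, (y i)^2) - (t:ℝ)⁻¹ * (∑ i, y i)^2 := by
    have e1 : ∀ i, ∑ j, Qm i j * y i * y j
        = (y i)^2 - ∑ j, ((t:ℝ)⁻¹ * y i) * y j := by
      intro i
      rw [Finset.sum_congr rfl (fun j _ => show Qm i j * y i * y j
          = (if i = j then y i * y j else 0) - ((t:ℝ)⁻¹ * y i) * y j by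
        rw [happ]
        rcases eq_or_ne i j with rfl | hij
        · simp; ring
        · simp [hij])]
      rw [Finset.sum_sub_distrib, Finset.sum_ite_eq Finset.univ i (fun j => y i * y j)]
      simp [sq]
    rw [Finset.sum_congr rfl fun i _ => e1 i, Finset.sum_sub_distrib]
    congr 1
    have e : ∑ i, ∑ j, ((t:ℝ)⁻¹ * y i) * y j = (∑ i, (t:ℝ)⁻¹ * y i) * (∑ j, y j) :=
      (Finset.sum_mul_sum _ _ _ _).symm
    rw [e, ← Finset.mul_sum]; ring
  rw [hsum, sub_nonneg, inv_mul_le_iff₀ htpos]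
  have := sq_sum_le_card_mul_sum_sq (s := (Finset.univ : Finset (Fin t))) (f := y)
  simpa using this

end ThetaAux

/-- If `ϑ'(G) ≥ t` for an integer `t ≥ 1`, then `ϑ'(G_t) ≥ t`. -/
theorem thetaPrime_Gt {V : Type*} [Fintype V] [DecidableEq V] (G : SimpleGraph V)
    (t : ℕ) (ht : 1 ≤ t) (h : (t : ℝ) ≤ thetaPrime G) :
    (t : ℝ) ≤ thetaPrime (Gt G t) := by
  classical
  have htpos : 0 < t := ht
  have htR : (1:ℝ) ≤ t := by exact_mod_cast ht
  have htRpos : (0:ℝ) < t := by exact_mod_cast htpos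
  have hbdd := theta_set_bddAbove (Gt G t)
  -- the source feasible set is nonempty
  have hneG : {r : ℝ | ∃ X : Matrix V V ℝ, X.PosSemidef ∧ (∀ u v, 0 ≤ X u v) ∧
      X.trace = 1 ∧ (∀ u v, G.Adj u v → X u v = 0) ∧ r = ∑ u, ∑ v, X u v}.Nonempty := by
    by_contra hempty
    rw [Set.not_nonempty_iff_eq_empty] at hempty
    rw [thetaPrime, hempty, Real.sSup_empty] at h
    linarith
  have hVne : Nonempty V := by
    obtain ⟨r₀, X₀, hX₀psd, _, hX₀tr, _, _⟩ := hneG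
    by_contra hV
    rw [not_nonempty_iff] at hV
    have h0 : X₀.trace = 0 := by simp [Matrix.trace]
    rw [hX₀tr] at h0; norm_num at h0
  rcases eq_or_lt_of_le ht with ht1 | ht2
  · -- t = 1
    subst ht1
    set u₀ : V := Classical.arbitrary V
    set Y : Matrix (V × Fin 1) (V × Fin 1) ℝ :=
      Matrix.diagonal (fun p => if p = (u₀, 0) then (1:ℝ) else 0) with hY
    have hmem : (1:ℝ) ∈ {r : ℝ | ∃ X : Matrix (V × Fin 1) (V × Fin 1) ℝ, X.PosSemidef ∧
        (∀ u v, 0 ≤ X u v) ∧ X.trace = 1 ∧ (∀ u v, (Gt G 1).Adj u v → X u v = 0) ∧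
        r = ∑ u, ∑ v, X u v} := by
      refine ⟨Y, Matrix.PosSemidef.diagonal (fun p => by dsimp only; split <;> norm_num), ?_, ?_, ?_, ?_⟩
      · intro u v
        rcases eq_or_ne u v with rfl | huv
        · rw [hY, Matrix.diagonal_apply_eq]; split <;> norm_num
        · rw [hY, Matrix.diagonal_apply_ne _ huv]
      · rw [hY, Matrix.trace_diagonal]
        rw [Finset.sum_ite_eq' Finset.univ ((u₀, 0) : V × Fin 1) (fun _ => (1:ℝ))]
        simp
      · intro u v hadj
        exact Matrix.diagonal_apply_ne _ hadj.ne
      · rw [hY]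
        simp [Matrix.diagonal_apply, Finset.sum_ite_eq, Finset.sum_ite_eq']
    have := le_csSup hbdd hmem
    simpa [thetaPrime] using this
  · -- 2 ≤ t
    have ht2R : (2:ℝ) ≤ t := by exact_mod_cast ht2
    rw [thetaPrime]
    apply le_of_forall_sub_le
    intro ε hε
    set ε' : ℝ := min ε 1 with hε'
    have hε'pos : 0 < ε' := lt_min hε one_pos
    have hε'le : ε' ≤ ε := min_le_left _ _
    have hε'1 : ε' ≤ 1 := min_le_right _ _
    obtain ⟨r, hrmem, hrgt⟩ := exists_lt_of_lt_csSup hneG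
      (show (t:ℝ) - ε' < thetaPrime G by linarith)
    obtain ⟨X, hXpsd, hXnn, hXtr, hXedge, rfl⟩ := hrmem
    obtain ⟨Z, hZpsd, hZnn, hZtr, hZedge, hSlam, hkey⟩ :=
      exists_good G hXpsd hXnn hXtr hXedge
    set lam : ℝ := ∑ u, ∑ v, Z u v with hlam
    have hlam1 : 1 < lam := by
      have : (t:ℝ) - ε' ≥ 1 := by linarith
      linarith [hSlam, hrgt]
    set T : ℝ := max lam (t:ℝ) with hT
    have hTlam : lam ≤ T := le_max_left _ _
    have hTt : (t:ℝ) ≤ T := le_max_right _ _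
    have hT1 : 1 < T := lt_of_lt_of_le hlam1 hTlam
    set d : V → ℝ := fun u => Z u u with hd
    have hdnn : ∀ u, 0 ≤ d u := fun u => hZnn u u
    have hdsum : ∑ u, d u = 1 := by simpa [Matrix.trace, Matrix.diag] using hZtr
    have hZsym : ∀ u v, Z v u = Z u v := fun u v => by
      have := hZpsd.1.apply u v; simpa using this
    -- the building blocks
    set D : Matrix V V ℝ := Matrix.diagonal d with hD
    set C₁ : Matrix V V ℝ := (T - t) • D + ((t:ℝ) - 1) • Z with hC₁
    set C₂ : Matrix V V ℝ := (T - lam) • D + (lam • D - Z) with hC₂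
    set P : Matrix (Fin t) (Fin t) ℝ := Matrix.of fun _ _ => (t:ℝ)⁻¹ with hP
    set Qm : Matrix (Fin t) (Fin t) ℝ :=
      Matrix.of fun i j => (if i = j then (1:ℝ) else 0) - (t:ℝ)⁻¹ with hQm
    have hDpsd : D.PosSemidef := Matrix.PosSemidef.diagonal (fun u => hdnn u)
    have hC₁psd : C₁.PosSemidef :=
      psd_add (psd_smul hDpsd (by linarith)) (psd_smul hZpsd (by linarith))
    have hC₂psd : C₂.PosSemidef := psd_add (psd_smul hDpsd (by linarith)) hkey
    set M : Matrix (V × Fin t) (V × Fin t) ℝ := C₁ ⊗ₖ P + C₂ ⊗ₖ Qm with hM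
    have hMpsd : M.PosSemidef :=
      psd_add (psd_kron hC₁psd (psd_P htpos)) (psd_kron hC₂psd (psd_Q htpos))
    have htne : (t:ℝ) ≠ 0 := ne_of_gt htRpos
    have hMentry : ∀ u i v j, M (u,i) (v,j) =
        if i = j then (if u = v then (T-1) * d u else 0)
        else (if u = v then 0 else Z u v) := by
      intro u i v j
      simp only [hM, hC₁, hC₂, hP, hQm, hD, Matrix.add_apply, Matrix.kroneckerMap_apply,
        Matrix.smul_apply, Matrix.sub_apply, Matrix.diagonal_apply, Matrix.of_apply,
        smul_eq_mul]
      rcases eq_or_ne i j with rfl | hij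
      · rcases eq_or_ne u v with rfl | huv
        · simp only [if_pos rfl, ↓reduceIte, hd]
          field_simp
          ring
        · simp only [if_neg huv, ↓reduceIte]
          field_simp
          ring
      · rcases eq_or_ne u v with rfl | huv
        · simp only [if_pos rfl, if_neg hij, ↓reduceIte, hd]
          field_simp
          ring
        · simp only [if_neg huv, if_neg hij]
          field_simp
          ring
    set c : ℝ := (t:ℝ) * (T - 1) with hc
    have hcpos : 0 < c := mul_pos htRpos (by linarith)
    set W : Matrix (V × Fin t) (V × Fin t) ℝ := c⁻¹ • M with hW
    have hWpsd : W.PosSemidef := psd_smul hMpsd (inv_nonneg.mpr hcpos.le)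
    have hWnn : ∀ p q, 0 ≤ W p q := by
      rintro ⟨u,i⟩ ⟨v,j⟩
      rw [hW, Matrix.smul_apply, hMentry, smul_eq_mul]
      have h1 : 0 ≤ (T-1) * d u := mul_nonneg (by linarith) (hdnn u)
      have h2 : (0:ℝ) ≤ (if i = j then (if u = v then (T-1) * d u else 0)
          else if u = v then 0 else Z u v) := by
        split_ifs
        · exact h1
        · exact le_refl 0
        · exact le_refl 0
        · exact hZnn u v
      exact mul_nonneg (inv_nonneg.mpr hcpos.le) h2
    have hdsum' : ∑ u, Z u u = 1 := hdsum
    have hWtr : W.trace = 1 := by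
      have htrM : M.trace = c := by
        rw [Matrix.trace]
        simp only [Matrix.diag]
        rw [Fintype.sum_prod_type]
        rw [Finset.sum_congr rfl (fun u _ => Finset.sum_congr rfl (fun i _ =>
          show M (u,i) (u,i) = (T-1) * d u by rw [hMentry]; simp))]
        simp only [Finset.sum_const, Finset.card_univ, Fintype.card_fin, nsmul_eq_mul]
        rw [← Finset.mul_sum, ← Finset.mul_sum, hdsum]
        rw [hc]; ring
      rw [hW, Matrix.trace_smul, htrM, smul_eq_mul, inv_mul_cancel₀ (ne_of_gt hcpos)]
    have hWedge : ∀ p q, (Gt G t).Adj p q → W p q = 0 := by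
      rintro ⟨u,i⟩ ⟨v,j⟩ hadj
      rw [hW, Matrix.smul_apply, hMentry, smul_eq_mul]
      obtain ⟨hne, hrel⟩ := hadj
      rcases eq_or_ne i j with rfl | hij
      · have huv : u ≠ v := by rintro rfl; exact hne rfl
        simp [huv]
      · have hcase : u = v ∨ G.Adj u v := by
          rcases hrel with (⟨_, hcase⟩ | ⟨hij', _⟩) | (⟨_, hcase⟩ | ⟨hij', _⟩)
          · exact hcase
          · exact absurd hij' hij
          · rcases hcase with he | ha
            · exact Or.inl he.symm
            · exact Or.inr ha.symm
          · exact absurd hij'.symm hij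
        rcases hcase with rfl | hadj'
        · simp [hij]
        · simp [hij, G.ne_of_adj hadj', hZedge u v hadj']
    have hrowv : ∀ u (i : Fin t) v, ∑ j, M (u,i) (v,j)
        = if u = v then (T-1) * d u else ((t:ℝ)-1) * Z u v := by
      intro u i v
      rcases eq_or_ne u v with rfl | huv
      · rw [Finset.sum_congr rfl (fun j _ => show M (u,i) (u,j)
            = if i = j then (T-1) * d u else 0 by rw [hMentry]; simp)]
        rw [Finset.sum_ite_eq Finset.univ i (fun _ => (T-1) * d u)]
        simp
      · rw [Finset.sum_congr rfl (fun j _ => show M (u,i) (v,j)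
            = Z u v - (if i = j then Z u v else 0) by
          rw [hMentry]
          rcases eq_or_ne i j with rfl | hij
          · simp [huv]
          · simp [huv, hij])]
        rw [Finset.sum_sub_distrib, Finset.sum_const,
          Finset.sum_ite_eq Finset.univ i (fun _ => Z u v)]
        simp only [Finset.card_univ, Fintype.card_fin, nsmul_eq_mul, Finset.mem_univ,
          if_true, if_neg huv]
        ring
    have hMsum : ∑ p, ∑ q, M p q = (t:ℝ) * ((T-1) + ((t:ℝ)-1)*(lam-1)) := by
      have hrow : ∀ u (i : Fin t), ∑ q : V × Fin t, M (u,i) q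
          = (T-1) * d u + ((t:ℝ)-1) * ((∑ v, Z u v) - Z u u) := by
        intro u i
        rw [Fintype.sum_prod_type]
        rw [Finset.sum_congr rfl (fun v _ => hrowv u i v)]
        rw [Finset.sum_congr rfl (fun v _ => show
            (if u = v then (T-1) * d u else ((t:ℝ)-1) * Z u v)
            = (if u = v then (T-1) * d u - ((t:ℝ)-1) * Z u v else 0)
              + ((t:ℝ)-1) * Z u v by split_ifs <;> ring)]
        rw [Finset.sum_add_distrib,
          Finset.sum_ite_eq Finset.univ u (fun v => (T-1) * d u - ((t:ℝ)-1) * Z u v),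
          ← Finset.mul_sum]
        simp only [Finset.mem_univ, if_true]
        have hdu : d u = Z u u := rfl
        rw [hdu]
        ring
      rw [Fintype.sum_prod_type]
      rw [Finset.sum_congr rfl (fun u _ => Finset.sum_congr rfl (fun i _ => hrow u i))]
      simp only [Finset.sum_const, Finset.card_univ, Fintype.card_fin, nsmul_eq_mul]
      rw [← Finset.mul_sum]
      congr 1
      rw [Finset.sum_add_distrib, ← Finset.mul_sum, hdsum, ← Finset.mul_sum,
        Finset.sum_sub_distrib, ← hlam, hdsum']
      ring
    have hval : ∑ p, ∑ q, W p q
        = c⁻¹ * ((t:ℝ) * ((T - 1) + ((t:ℝ)-1) * (lam - 1))) := by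
      rw [hW]
      simp only [Matrix.smul_apply, smul_eq_mul]
      rw [show ∑ p, ∑ q, c⁻¹ * M p q = c⁻¹ * ∑ p, ∑ q, M p q by
        rw [Finset.mul_sum]
        exact Finset.sum_congr rfl fun p _ => by rw [Finset.mul_sum]]
      rw [hMsum]
    have hmem : c⁻¹ * ((t:ℝ) * ((T - 1) + ((t:ℝ)-1) * (lam - 1))) ∈
        {r : ℝ | ∃ X : Matrix (V × Fin t) (V × Fin t) ℝ, X.PosSemidef ∧
          (∀ u v, 0 ≤ X u v) ∧ X.trace = 1 ∧
          (∀ u v, (Gt G t).Adj u v → X u v = 0) ∧ r = ∑ u, ∑ v, X u v} :=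
      ⟨W, hWpsd, hWnn, hWtr, hWedge, hval.symm⟩
    have hle := le_csSup hbdd hmem
    have harith : (t:ℝ) - ε ≤ c⁻¹ * ((t:ℝ) * ((T - 1) + ((t:ℝ)-1) * (lam - 1))) := by
      rcases le_total (t:ℝ) lam with hcase | hcase
      · have hTeq : T = lam := max_eq_left hcase
        have heq : c⁻¹ * ((t:ℝ) * ((T - 1) + ((t:ℝ)-1) * (lam - 1))) = t := by
          rw [hc, hTeq]
          have h1 : (t:ℝ) * (lam - 1) ≠ 0 := by
            apply mul_ne_zero htne; linarith
          rw [show (t:ℝ) * ((lam - 1) + ((t:ℝ)-1) * (lam - 1))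
              = ((t:ℝ) * (lam - 1)) * t from by ring, inv_mul_cancel_left₀ h1]
        rw [heq]; linarith
      · have hTeq : T = t := max_eq_right hcase
        have heq : c⁻¹ * ((t:ℝ) * ((T - 1) + ((t:ℝ)-1) * (lam - 1))) = lam := by
          rw [hc, hTeq]
          have h1 : (t:ℝ) * ((t:ℝ) - 1) ≠ 0 := by
            apply mul_ne_zero htne; linarith
          rw [show (t:ℝ) * (((t:ℝ) - 1) + ((t:ℝ)-1) * (lam - 1))
              = ((t:ℝ) * ((t:ℝ) - 1)) * lam from by ring, inv_mul_cancel_left₀ h1]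
        rw [heq]; linarith
    linarith
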